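/- For every Mockingbird term t, the map fr restricts to an order isomorphism from the poset {s : t ≼ s} (ordered by ≼) onto the poset D*(fr(t)) (ordered by ≪). -/
import Mathlib


/-- Mockingbird terms: the constant `M`, variables `x i`, and applications. -/
inductive MTerm : Type
  | M : MTerm
  | var : ℕ → MTerm
  | app : MTerm → MTerm → MTerm
  deriving DecidableEq

/-- The one-step rewrite relation `⇒` on Mockingbird terms. -/
inductive Step : MTerm → MTerm → Prop
  | mock (t : MTerm) : Step (MTerm.app MTerm.M t) (MTerm.app t t)
  | left {t1 t1' : MTerm} (t2 : MTerm) :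
      Step t1 t1' → Step (MTerm.app t1 t2) (MTerm.app t1' t2)
  | right (t1 : MTerm) {t2 t2' : MTerm} :
      Step t2 t2' → Step (MTerm.app t1 t2) (MTerm.app t1 t2')

/-- `≼`, the reflexive-transitive closure of `⇒`. -/
def MLe : MTerm → MTerm → Prop := Relation.ReflTransGen Step

/-- `≡`, the reflexive-symmetric-transitive closure of `⇒`. -/
def MEquiv : MTerm → MTerm → Prop := Relation.EqvGen Step

/-- Strict version of `≼`. -/
def MLt (s t : MTerm) : Prop := MLe s t ∧ s ≠ t

/-- Covering relation for `≼`. -/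
def MCovBy (s t : MTerm) : Prop := MLt s t ∧ ∀ z, MLt s z → ¬ MLt z t

/-- Duplicative trees: white or black nodes with a list (forest) of children. -/
inductive DTree : Type
  | W : List DTree → DTree
  | B : List DTree → DTree

/-- The one-step relation `⋖` on duplicative forests. -/
inductive DStep : List DTree → List DTree → Prop
  | dup (g : List DTree) : DStep [DTree.W g] [DTree.B (g ++ g)]
  | white {g g' : List DTree} : DStep g g' → DStep [DTree.W g] [DTree.W g']
  | black {g g' : List DTree} : DStep g g' → DStep [DTree.B g] [DTree.B g']
  | head {t t' : DTree} (f : List DTree) : DStep [t] [t'] → DStep (t :: f) (t' :: f)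
  | tail (t : DTree) {f f' : List DTree} : DStep f f' → DStep (t :: f) (t :: f')

/-- `≪`, the reflexive-transitive closure of `⋖`. -/
def DLe : List DTree → List DTree → Prop := Relation.ReflTransGen DStep

/-- The map `fr` from Mockingbird terms to duplicative forests. -/
def fr : MTerm → List DTree
  | MTerm.M => []
  | MTerm.var _ => []
  | MTerm.app MTerm.M MTerm.M => [DTree.B []]
  | MTerm.app MTerm.M t' => [DTree.W (fr t')]
  | MTerm.app t t' => [DTree.B (fr t ++ fr t')]

mutual
  /-- The pruning map on duplicative trees (returns a forest). -/
  def prT : DTree → List DTree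
    | DTree.W g => [DTree.W (prF g)]
    | DTree.B g => prF g
  /-- The pruning map on duplicative forests. -/
  def prF : List DTree → List DTree
    | [] => []
    | t :: f => prT t ++ prF f
end

mutual
  /-- The statistic `mtStat` on duplicative trees. -/
  def mtStat : DTree → ℕ
    | DTree.W g => 2 * ml g
    | DTree.B g => ml g
  /-- Sum of `mtStat` over the trees of a forest. -/
  def mtsum : List DTree → ℕ
    | [] => 0
    | t :: f => mtStat t + mtsum f
  /-- The statistic `ml` on duplicative forests: `1 - ℓ + Σ mtStat`. -/
  def ml : List DTree → ℕ
    | f => mtsum f + 1 - f.length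
end

mutual
  /-- Number of white nodes in a duplicative tree. -/
  def whitesT : DTree → ℕ
    | DTree.W g => 1 + whitesF g
    | DTree.B g => whitesF g
  /-- Number of white nodes in a duplicative forest. -/
  def whitesF : List DTree → ℕ
    | [] => 0
    | t :: f => whitesT t + whitesF f
end

/-- Closed terms: no variables. -/
def MClosed : MTerm → Prop
  | MTerm.M => True
  | MTerm.var _ => False
  | MTerm.app a b => MClosed a ∧ MClosed b

/-- Degree: number of applications. -/
def deg : MTerm → ℕ
  | MTerm.M => 0
  | MTerm.var _ => 0
  | MTerm.app a b => deg a + deg b + 1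

/-- Subterm relation. -/
inductive Subterm : MTerm → MTerm → Prop
  | refl (t : MTerm) : Subterm t t
  | left {s a : MTerm} (b : MTerm) : Subterm s a → Subterm s (MTerm.app a b)
  | right (a : MTerm) {s b : MTerm} : Subterm s b → Subterm s (MTerm.app a b)

/-- The term `r_d`. -/
def rTerm : ℕ → MTerm
  | 0 => MTerm.M
  | d + 1 => MTerm.app MTerm.M (rTerm d)

/-- Saturated chain from `a` to `b`, given as the list of its elements. -/
def SatChain (a b : MTerm) (c : List MTerm) : Prop :=
  List.Chain' MCovBy c ∧ c.head? = some a ∧ c.getLast? = some b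

/-! ### Auxiliary lemmas -/

open MTerm DTree

lemma step_M {s : MTerm} : ¬ Step MTerm.M s := by rintro ⟨⟩

lemma step_var {i : ℕ} {s : MTerm} : ¬ Step (MTerm.var i) s := by rintro ⟨⟩

lemma step_tgt {s s' : MTerm} (h : Step s s') : ∃ u v, s' = MTerm.app u v := by
  cases h with
  | mock t => exact ⟨t, t, rfl⟩
  | left t2 h => exact ⟨_, _, rfl⟩
  | right t1 h => exact ⟨_, _, rfl⟩

lemma step_tgt_ne_M {s s' : MTerm} (h : Step s s') : s' ≠ MTerm.M := by
  obtain ⟨u, v, rfl⟩ := step_tgt h; simp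

lemma step_src {s s' : MTerm} (h : Step s s') : ∃ u v, s = MTerm.app u v := by
  cases h <;> exact ⟨_, _, rfl⟩

lemma fr_app_M {b : MTerm} (hb : b ≠ MTerm.M) :
    fr (MTerm.app MTerm.M b) = [DTree.W (fr b)] := by
  cases b with
  | M => exact absurd rfl hb
  | var i => rfl
  | app u v => rfl

lemma fr_app_ne {a : MTerm} (b : MTerm) (ha : a ≠ MTerm.M) :
    fr (MTerm.app a b) = [DTree.B (fr a ++ fr b)] := by
  cases a with
  | M => exact absurd rfl ha
  | var i => rfl
  | app u v => rfl

lemma fr_app_single (a b : MTerm) : ∃ x, fr (MTerm.app a b) = [x] := by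
  by_cases ha : a = MTerm.M
  · subst ha
    by_cases hb : b = MTerm.M
    · subst hb; exact ⟨_, rfl⟩
    · exact ⟨_, fr_app_M hb⟩
  · exact ⟨_, fr_app_ne b ha⟩

lemma fr_nil_or_single (s : MTerm) : fr s = [] ∨ ∃ x, fr s = [x] := by
  cases s with
  | M => exact Or.inl rfl
  | var i => exact Or.inl rfl
  | app a b => exact Or.inr (fr_app_single a b)

lemma fr_eq_nil {s : MTerm} (h : fr s = []) : s = MTerm.M ∨ ∃ i, s = MTerm.var i := by
  cases s with
  | M => exact Or.inl rfl
  | var i => exact Or.inr ⟨i, rfl⟩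
  | app a b => obtain ⟨x, hx⟩ := fr_app_single a b; rw [hx] at h; cases h

lemma mle_M {s : MTerm} (h : MLe MTerm.M s) : s = MTerm.M := by
  induction h with
  | refl => rfl
  | tail _ h ih => subst ih; exact absurd h step_M

lemma mle_var {i : ℕ} {s : MTerm} (h : MLe (MTerm.var i) s) : s = MTerm.var i := by
  induction h with
  | refl => rfl
  | tail _ h ih => subst ih; exact absurd h step_var

lemma mle_ne_M {a s : MTerm} (h : MLe a s) (ha : a ≠ MTerm.M) : s ≠ MTerm.M := by
  cases h with
  | refl => exact ha
  | tail _ h => exact step_tgt_ne_M h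

lemma mle_app {x y s : MTerm} (h : MLe (MTerm.app x y) s) :
    ∃ u v, s = MTerm.app u v := by
  cases h with
  | refl => exact ⟨x, y, rfl⟩
  | tail _ h => exact step_tgt h

lemma mle_appMM {s : MTerm} (h : MLe (MTerm.app MTerm.M MTerm.M) s) :
    s = MTerm.app MTerm.M MTerm.M := by
  induction h with
  | refl => rfl
  | tail _ hstep ih =>
    subst ih
    cases hstep with
    | mock => rfl
    | left _ h => exact absurd h step_M
    | right _ h => exact absurd h step_M

lemma mle_app_iff {a : MTerm} (ha : a ≠ MTerm.M) {b s : MTerm}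
    (h : MLe (MTerm.app a b) s) :
    ∃ a' b', s = MTerm.app a' b' ∧ MLe a a' ∧ MLe b b' := by
  induction h with
  | refl => exact ⟨a, b, rfl, Relation.ReflTransGen.refl, Relation.ReflTransGen.refl⟩
  | tail _ hstep ih =>
    obtain ⟨a', b', rfl, ha', hb'⟩ := ih
    cases hstep with
    | mock t => exact absurd rfl (mle_ne_M ha' ha)
    | left t2 h => exact ⟨_, _, rfl, ha'.tail h, hb'⟩
    | right t1 h => exact ⟨_, _, rfl, ha', hb'.tail h⟩

lemma mle_appM_iff {b s : MTerm} (h : MLe (MTerm.app MTerm.M b) s) :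
    (∃ b', s = MTerm.app MTerm.M b' ∧ MLe b b') ∨
    (∃ c, MLe b c ∧ MLe (MTerm.app c c) s) := by
  induction h with
  | refl => exact Or.inl ⟨b, rfl, Relation.ReflTransGen.refl⟩
  | tail _ hstep ih =>
    rcases ih with ⟨b', rfl, hb'⟩ | ⟨c, hc, hcs⟩
    · cases hstep with
      | mock t => exact Or.inr ⟨b', hb', Relation.ReflTransGen.refl⟩
      | left t2 h => exact absurd h step_M
      | right t1 h => exact Or.inl ⟨_, rfl, hb'.tail h⟩
    · exact Or.inr ⟨c, hc, hcs.tail hstep⟩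

lemma dstep_ne_nil {f f' : List DTree} (h : DStep f f') : f ≠ [] := by
  cases h <;> simp

lemma dstep_length {f f' : List DTree} (h : DStep f f') : f.length = f'.length := by
  induction h <;> simp_all

lemma dstep_append_right {g g' : List DTree} (h : DStep g g') (f : List DTree) :
    DStep (g ++ f) (g' ++ f) := by
  induction h with
  | dup g => exact DStep.head f (DStep.dup g)
  | white h => exact DStep.head f (DStep.white h)
  | black h => exact DStep.head f (DStep.black h)
  | head f0 h => exact DStep.head (f0 ++ f) h
  | tail t h ih => exact DStep.tail t ih

lemma dstep_append_left (f : List DTree) {g g' : List DTree} (h : DStep g g') :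
    DStep (f ++ g) (f ++ g') := by
  induction f with
  | nil => exact h
  | cons t f ih => exact DStep.tail t ih

lemma dstep_single_aux {f f' : List DTree} (h : DStep f f') :
    ∀ x, f = [x] →
      (∃ g, x = DTree.W g ∧ f' = [DTree.B (g ++ g)]) ∨
      (∃ g g', x = DTree.W g ∧ f' = [DTree.W g'] ∧ DStep g g') ∨
      (∃ g g', x = DTree.B g ∧ f' = [DTree.B g'] ∧ DStep g g') := by
  induction h with
  | dup g =>
    intro x hx
    injection hx with h1 _
    exact Or.inl ⟨g, h1.symm, rfl⟩
  | white h =>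
    intro x hx
    injection hx with h1 _
    exact Or.inr (Or.inl ⟨_, _, h1.symm, rfl, h⟩)
  | black h =>
    intro x hx
    injection hx with h1 _
    exact Or.inr (Or.inr ⟨_, _, h1.symm, rfl, h⟩)
  | head f0 h ih =>
    intro x hx
    injection hx with h1 h2
    subst h2
    exact ih x (by rw [h1])
  | tail t h ih =>
    intro x hx
    injection hx with _ h2
    subst h2
    exact absurd rfl (dstep_ne_nil h)

lemma dstep_single {x : DTree} {f' : List DTree} (h : DStep [x] f') :
    (∃ g, x = DTree.W g ∧ f' = [DTree.B (g ++ g)]) ∨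
    (∃ g g', x = DTree.W g ∧ f' = [DTree.W g'] ∧ DStep g g') ∨
    (∃ g g', x = DTree.B g ∧ f' = [DTree.B g'] ∧ DStep g g') :=
  dstep_single_aux h x rfl

lemma dstep_pair_aux {f f' : List DTree} (h : DStep f f') :
    ∀ x y, f = [x, y] →
      (∃ x', DStep [x] [x'] ∧ f' = [x', y]) ∨
      (∃ y', DStep [y] [y'] ∧ f' = [x, y']) := by
  induction h with
  | dup g => intro x y hx; simp at hx
  | white h => intro x y hx; simp at hx
  | black h => intro x y hx; simp at hx
  | head f0 h ih =>
    intro x y hx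
    injection hx with h1 h2
    subst h1 h2
    exact Or.inl ⟨_, h, rfl⟩
  | tail t h ih =>
    intro x y hx
    injection hx with h1 h2
    subst h1 h2
    have hl := dstep_length h
    rename_i f'0
    match f'0, hl with
    | [y'], _ => exact Or.inr ⟨y', h, rfl⟩

lemma dstep_pair {x y : DTree} {f' : List DTree} (h : DStep [x, y] f') :
    (∃ x', DStep [x] [x'] ∧ f' = [x', y]) ∨
    (∃ y', DStep [y] [y'] ∧ f' = [x, y']) :=
  dstep_pair_aux h x y rfl

/-- One-step lifting: every `DStep` out of `fr s` comes from a `Step` out of `s`. -/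
lemma lift_dstep (s : MTerm) : ∀ {f' : List DTree}, DStep (fr s) f' →
    ∃ s', Step s s' ∧ fr s' = f' := by
  induction s with
  | M => intro f' h; exact absurd rfl (dstep_ne_nil h)
  | var i => intro f' h; exact absurd rfl (dstep_ne_nil h)
  | app a b iha ihb =>
    intro f' h
    by_cases ha : a = MTerm.M
    · subst ha
      by_cases hb : b = MTerm.M
      · subst hb
        rcases dstep_single h with ⟨g, hg, _⟩ | ⟨g, g', hg, _, _⟩ | ⟨g, g', hg, _, hgg⟩
        · cases hg
        · cases hg
        · injection hg with hg
          subst hg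
          exact absurd rfl (dstep_ne_nil hgg)
      · rw [fr_app_M hb] at h
        rcases dstep_single h with ⟨g, hg, hf'⟩ | ⟨g, g', hg, hf', hgg⟩ | ⟨g, g', hg, _, _⟩
        · injection hg with hg
          subst hg
          refine ⟨MTerm.app b b, Step.mock b, ?_⟩
          rw [fr_app_ne b hb, hf']
        · injection hg with hg
          subst hg
          obtain ⟨b', hstep, hfb⟩ := ihb hgg
          refine ⟨MTerm.app MTerm.M b', Step.right _ hstep, ?_⟩
          rw [fr_app_M (step_tgt_ne_M hstep), hfb, hf']
        · cases hg
    · rw [fr_app_ne b ha] at h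
      rcases dstep_single h with ⟨g, hg, _⟩ | ⟨g, g', hg, _, _⟩ | ⟨g, g', hg, hf', hgg⟩
      · cases hg
      · cases hg
      · injection hg with hg
        subst hg
        rcases fr_nil_or_single a with haa | ⟨xa, hxa⟩
        · -- a is a variable
          rcases fr_eq_nil haa with rfl | ⟨i, rfl⟩
          · exact absurd rfl ha
          · rw [haa, List.nil_append] at hgg
            obtain ⟨b', hstep, hfb⟩ := ihb hgg
            refine ⟨MTerm.app (MTerm.var i) b', Step.right _ hstep, ?_⟩
            rw [fr_app_ne b' (by simp), hf', hfb]
            rfl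
        · rcases fr_nil_or_single b with hbb | ⟨xb, hxb⟩
          · rw [hbb, List.append_nil] at hgg
            obtain ⟨a', hstep, hfa⟩ := iha hgg
            refine ⟨MTerm.app a' b, Step.left _ hstep, ?_⟩
            rw [fr_app_ne b (step_tgt_ne_M hstep), hfa, hbb, List.append_nil, hf']
          · rw [hxa, hxb] at hgg
            rcases dstep_pair hgg with ⟨x', hst, rfl⟩ | ⟨y', hst, rfl⟩
            · rw [← hxa] at hst
              obtain ⟨a', hstep, hfa⟩ := iha hst
              refine ⟨MTerm.app a' b, Step.left _ hstep, ?_⟩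
              rw [fr_app_ne b (step_tgt_ne_M hstep), hfa, hxb, hf']
              rfl
            · rw [← hxb] at hst
              obtain ⟨b', hstep, hfb⟩ := ihb hst
              refine ⟨MTerm.app a b', Step.right _ hstep, ?_⟩
              rw [fr_app_ne b' ha, hfb, hxa, hf']
              rfl

/-- A non-trivial step induces a `DStep` on forests. -/
lemma step_dstep : ∀ {s s' : MTerm}, Step s s' → s ≠ s' → DStep (fr s) (fr s') := by
  intro s s' h
  induction h with
  | mock t =>
    intro hne
    have ht : t ≠ MTerm.M := by rintro rfl; exact hne rfl
    rw [fr_app_M ht, fr_app_ne t ht]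
    exact DStep.dup (fr t)
  | left t2 h ih =>
    intro hne
    rename_i t1 t1'
    have hne1 : t1 ≠ t1' := by rintro rfl; exact hne rfl
    obtain ⟨u, v, rfl⟩ := step_src h
    rw [fr_app_ne t2 (by simp), fr_app_ne t2 (step_tgt_ne_M h)]
    exact DStep.black (dstep_append_right (ih hne1) (fr t2))
  | right t1 h ih =>
    intro hne
    rename_i t2 t2'
    have hne2 : t2 ≠ t2' := by rintro rfl; exact hne rfl
    have h2M : t2 ≠ MTerm.M := by obtain ⟨u, v, rfl⟩ := step_src h; simp
    by_cases h1 : t1 = MTerm.M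
    · subst h1
      rw [fr_app_M h2M, fr_app_M (step_tgt_ne_M h)]
      exact DStep.white (ih hne2)
    · rw [fr_app_ne t2 h1, fr_app_ne t2' h1]
      exact DStep.black (dstep_append_left (fr t1) (ih hne2))

lemma mle_dle {s s' : MTerm} (h : MLe s s') : DLe (fr s) (fr s') := by
  induction h with
  | refl => exact Relation.ReflTransGen.refl
  | tail _ hstep ih =>
    rename_i b c _
    by_cases he : b = c
    · exact he ▸ ih
    · exact ih.tail (step_dstep hstep he)

/-- Injectivity of `fr` on the upset of `t`. -/
lemma fr_inj (t : MTerm) : ∀ s1 s2, MLe t s1 → MLe t s2 → fr s1 = fr s2 → s1 = s2 := by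
  induction t with
  | M => intro s1 s2 h1 h2 _; rw [mle_M h1, mle_M h2]
  | var i => intro s1 s2 h1 h2 _; rw [mle_var h1, mle_var h2]
  | app a b iha ihb =>
    intro s1 s2 h1 h2 hfr
    by_cases ha : a = MTerm.M
    · subst ha
      by_cases hb : b = MTerm.M
      · subst hb; rw [mle_appMM h1, mle_appMM h2]
      · rcases mle_appM_iff h1 with ⟨b1, rfl, hb1⟩ | ⟨c1, hc1, hs1⟩ <;>
          rcases mle_appM_iff h2 with ⟨b2, rfl, hb2⟩ | ⟨c2, hc2, hs2⟩
        · rw [fr_app_M (mle_ne_M hb1 hb), fr_app_M (mle_ne_M hb2 hb)] at hfr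
          injection hfr with hfr
          injection hfr with hfr
          rw [ihb b1 b2 hb1 hb2 hfr]
        · obtain ⟨u2, v2, rfl, hu2, hv2⟩ := mle_app_iff (mle_ne_M hc2 hb) hs2
          rw [fr_app_M (mle_ne_M hb1 hb),
            fr_app_ne v2 (mle_ne_M (hc2.trans hu2) hb)] at hfr
          injection hfr with hfr
          cases hfr
        · obtain ⟨u1, v1, rfl, hu1, hv1⟩ := mle_app_iff (mle_ne_M hc1 hb) hs1
          rw [fr_app_M (mle_ne_M hb2 hb),
            fr_app_ne v1 (mle_ne_M (hc1.trans hu1) hb)] at hfr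
          injection hfr with hfr
          cases hfr
        · obtain ⟨u1, v1, rfl, hu1, hv1⟩ := mle_app_iff (mle_ne_M hc1 hb) hs1
          obtain ⟨u2, v2, rfl, hu2, hv2⟩ := mle_app_iff (mle_ne_M hc2 hb) hs2
          have hbu1 : MLe b u1 := hc1.trans hu1
          have hbv1 : MLe b v1 := hc1.trans hv1
          have hbu2 : MLe b u2 := hc2.trans hu2
          have hbv2 : MLe b v2 := hc2.trans hv2
          rw [fr_app_ne v1 (mle_ne_M hbu1 hb), fr_app_ne v2 (mle_ne_M hbu2 hb)] at hfr
          injection hfr with hfr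
          injection hfr with hfr
          have hlen : (fr u1).length = (fr u2).length := by
            cases b with
            | M => exact absurd rfl hb
            | var j => rw [mle_var hbu1, mle_var hbu2]
            | app x y =>
              obtain ⟨p1, q1, rfl⟩ := mle_app hbu1
              obtain ⟨p2, q2, rfl⟩ := mle_app hbu2
              obtain ⟨z1, hz1⟩ := fr_app_single p1 q1
              obtain ⟨z2, hz2⟩ := fr_app_single p2 q2
              simp [hz1, hz2]
          obtain ⟨e1, e2⟩ := List.append_inj hfr hlen
          rw [ihb u1 u2 hbu1 hbu2 e1, ihb v1 v2 hbv1 hbv2 e2]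
    · obtain ⟨a1, b1, rfl, ha1, hb1⟩ := mle_app_iff ha h1
      obtain ⟨a2, b2, rfl, ha2, hb2⟩ := mle_app_iff ha h2
      rw [fr_app_ne b1 (mle_ne_M ha1 ha), fr_app_ne b2 (mle_ne_M ha2 ha)] at hfr
      injection hfr with hfr
      injection hfr with hfr
      have hlen : (fr a1).length = (fr a2).length := by
        cases a with
        | M => exact absurd rfl ha
        | var j => rw [mle_var ha1, mle_var ha2]
        | app x y =>
          obtain ⟨p1, q1, rfl⟩ := mle_app ha1
          obtain ⟨p2, q2, rfl⟩ := mle_app ha2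
          obtain ⟨z1, hz1⟩ := fr_app_single p1 q1
          obtain ⟨z2, hz2⟩ := fr_app_single p2 q2
          simp [hz1, hz2]
      obtain ⟨e1, e2⟩ := List.append_inj hfr hlen
      rw [iha a1 a2 ha1 ha2 e1, ihb b1 b2 hb1 hb2 e2]

lemma dle_surj (t : MTerm) : ∀ f', DLe (fr t) f' → ∃ s, MLe t s ∧ fr s = f' := by
  intro f' h
  induction h with
  | refl => exact ⟨t, Relation.ReflTransGen.refl, rfl⟩
  | tail _ hstep ih =>
    obtain ⟨s, hts, rfl⟩ := ih
    obtain ⟨s', h1, h2⟩ := lift_dstep s hstep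
    exact ⟨s', hts.tail h1, h2⟩

lemma dle_reflect {t s s' : MTerm} (hs : MLe t s) (hs' : MLe t s')
    (h : DLe (fr s) (fr s')) : MLe s s' := by
  have key : ∀ f, DLe f (fr s') → ∀ u, MLe t u → fr u = f → MLe u s' := by
    intro f hf
    induction hf using Relation.ReflTransGen.head_induction_on with
    | refl =>
      intro u htu hfu
      rw [fr_inj t u s' htu hs' hfu]
      exact Relation.ReflTransGen.refl
    | head hstep htl ih =>
      intro u htu hfu
      subst hfu
      obtain ⟨u', hu1, hu2⟩ := lift_dstep u hstep
      exact Relation.ReflTransGen.head hu1 (ih u' (htu.tail hu1) hu2)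
  exact key (fr s) h s hs rfl


/-- the map `fr` restricts to an order isomorphism from `{s : t ≼ s}`
(ordered by `≼`) onto `D*(fr t)` (ordered by `≪`). -/
theorem fr_restricts_to_order_iso (t : MTerm) :
    (∀ s, MLe t s → DLe (fr t) (fr s)) ∧
    (∀ s s', MLe t s → MLe t s' → fr s = fr s' → s = s') ∧
    (∀ f', DLe (fr t) f' → ∃ s, MLe t s ∧ fr s = f') ∧
    (∀ s s', MLe t s → MLe t s' → (MLe s s' ↔ DLe (fr s) (fr s'))) := by
  refine ⟨fun s hs => mle_dle hs, fun s s' h1 h2 => fr_inj t s s' h1 h2, dle_surj t,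
    fun s s' h1 h2 => ⟨mle_dle, fun h => dle_reflect h1 h2 h⟩⟩
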